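/- There exists a constant C>0 with the following property. Let f:ℝ₊→ℝ satisfy: (i) ∫₀^∞ f(x) dm_λ(x) = 0; (ii) there exist x₁,x₂,r ∈ ℝ₊ and D₁,D₂ > 0 with |f(x)| ≤ D₁·1_{I(x₁,r)}(x) + D₂·1_{I(x₂,r)}(x) for all x; (iii) |x₁−x₂| ≥ 4r. Then there exist finitely many (1,∞)_{Δ_λ}-atoms a₁,…,a_N and real numbers α₁,…,α_N such that f = Σ_{j=1}^N α_j a_j pointwise almost everywhere and Σ_{j=1}^N |α_j| ≤ C · log₂(|x₁−x₂|/r) · [ D₁·m_λ(I(x₁,r)) + D₂·m_λ(I(x₂,r)) ], with C independent of x₁, x₂, r, D₁, D₂ and f. -/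

import Mathlib

open MeasureTheory Real Set Filter

/-- The measure `dm_λ(x) = x^{2λ} dx` on `ℝ₊ = (0,∞)`. -/
noncomputable def mlam (lam : ℝ) : Measure ℝ :=
  (volume.restrict (Set.Ioi (0:ℝ))).withDensity (fun x => ENNReal.ofReal (x ^ (2*lam)))

/-- The interval `I(x,r) = (x-r, x+r) ∩ ℝ₊`. -/
def Ilam (x r : ℝ) : Set ℝ := Set.Ioo (x - r) (x + r) ∩ Set.Ioi 0

/-- A `(1,∞)_{Δ_λ}`-atom: a measurable function supported in a bounded open interval
`I ⊂ ℝ₊`, with `‖a‖_∞ ≤ m_λ(I)⁻¹` and `∫ a dm_λ = 0`. -/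
def IsDeltaAtom (lam : ℝ) (a : ℝ → ℝ) : Prop :=
  Measurable a ∧
  ∃ u v : ℝ, 0 ≤ u ∧ u < v ∧
    (∀ x, x ∉ Set.Ioo u v → a x = 0) ∧
    (∀ᵐ x ∂(mlam lam), |a x| ≤ ((mlam lam (Set.Ioo u v)).toReal)⁻¹) ∧
    ∫ x, a x ∂(mlam lam) = 0

lemma Ilam_eq (x r : ℝ) : Ilam x r = Set.Ioo (max (x - r) 0) (x + r) := by
  ext t
  simp only [Ilam, Set.mem_inter_iff, Set.mem_Ioo, Set.mem_Ioi, max_lt_iff]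
  tauto

lemma mlam_apply (lam : ℝ) (s : Set ℝ) (hs : MeasurableSet s) :
    mlam lam s = ∫⁻ x in s ∩ Set.Ioi 0, ENNReal.ofReal (x ^ (2*lam)) := by
  rw [mlam, withDensity_apply _ hs, Measure.restrict_restrict hs]

lemma mlam_Ioo_le (lam : ℝ) (hlam : 0 < lam) (u v : ℝ) (hu : 0 ≤ u) :
    mlam lam (Set.Ioo u v) ≤ ENNReal.ofReal (v ^ (2*lam) * (v - u)) := by
  rcases le_or_gt v u with h | h
  · rw [Set.Ioo_eq_empty (by exact fun hlt => absurd h (not_le.2 hlt))]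
    simp
  · rw [mlam_apply _ _ measurableSet_Ioo]
    have hsub : Set.Ioo u v ∩ Set.Ioi 0 ⊆ Set.Ioo u v := Set.inter_subset_left
    calc ∫⁻ x in Set.Ioo u v ∩ Set.Ioi 0, ENNReal.ofReal (x ^ (2*lam))
        ≤ ∫⁻ _ in Set.Ioo u v ∩ Set.Ioi 0, ENNReal.ofReal (v ^ (2*lam)) := by
          refine setLIntegral_mono' (measurableSet_Ioo.inter measurableSet_Ioi) ?_
          intro x hx
          exact ENNReal.ofReal_le_ofReal
            (Real.rpow_le_rpow (le_of_lt hx.2) (le_of_lt hx.1.2)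
              (by positivity))
      _ = ENNReal.ofReal (v ^ (2*lam)) * volume (Set.Ioo u v ∩ Set.Ioi 0) := by
          simp [setLIntegral_const, mul_comm]
      _ ≤ ENNReal.ofReal (v ^ (2*lam)) * volume (Set.Ioo u v) := by
          exact mul_le_mul_right (measure_mono hsub) _
      _ = ENNReal.ofReal (v ^ (2*lam)) * ENNReal.ofReal (v - u) := by
          rw [Real.volume_Ioo]
      _ = ENNReal.ofReal (v ^ (2*lam) * (v - u)) := by
          rw [ENNReal.ofReal_mul (Real.rpow_nonneg (by linarith) _)]

lemma mlam_Ioo_ge (lam : ℝ) (hlam : 0 < lam) (u v c : ℝ) (hc : 0 ≤ c) (huc : u ≤ c)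
    (hcv : c < v) :
    ENNReal.ofReal (c ^ (2*lam) * (v - c)) ≤ mlam lam (Set.Ioo u v) := by
  rw [mlam_apply _ _ measurableSet_Ioo]
  have hsub : Set.Ioo c v ⊆ Set.Ioo u v ∩ Set.Ioi 0 := by
    intro t ht
    exact ⟨⟨lt_of_le_of_lt huc ht.1, ht.2⟩, lt_of_le_of_lt hc ht.1⟩
  calc ENNReal.ofReal (c ^ (2*lam) * (v - c))
      = ENNReal.ofReal (c ^ (2*lam)) * volume (Set.Ioo c v) := by
        rw [Real.volume_Ioo, ENNReal.ofReal_mul (by positivity)]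
    _ = ∫⁻ _ in Set.Ioo c v, ENNReal.ofReal (c ^ (2*lam)) := by
        simp [setLIntegral_const, mul_comm]
    _ ≤ ∫⁻ x in Set.Ioo c v, ENNReal.ofReal (x ^ (2*lam)) := by
        refine setLIntegral_mono' measurableSet_Ioo ?_
        intro x hx
        exact ENNReal.ofReal_le_ofReal (Real.rpow_le_rpow hc (le_of_lt hx.1) (by positivity))
    _ ≤ _ := lintegral_mono_set hsub

lemma mlam_Ioo_ne_top (lam : ℝ) (hlam : 0 < lam) (u v : ℝ) (hu : 0 ≤ u) :
    mlam lam (Set.Ioo u v) ≠ ⊤ :=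
  ne_top_of_le_ne_top ENNReal.ofReal_ne_top (mlam_Ioo_le lam hlam u v hu)

lemma mlam_Ioo_pos (lam : ℝ) (hlam : 0 < lam) (u v : ℝ) (hu : 0 ≤ u) (huv : u < v) :
    0 < (mlam lam (Set.Ioo u v)).toReal := by
  have hv : 0 < v := lt_of_le_of_lt hu huv
  have hc : (0:ℝ) < (u + v) / 2 := by linarith
  have h := mlam_Ioo_ge lam hlam u v ((u+v)/2) hc.le (by linarith) (by linarith)
  have hpos : (0:ℝ) < ((u+v)/2) ^ (2*lam) * (v - (u+v)/2) := by
    have := Real.rpow_pos_of_pos hc (2*lam)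
    nlinarith
  have h1 : (0:ENNReal) < mlam lam (Set.Ioo u v) :=
    lt_of_lt_of_le (by simpa [ENNReal.ofReal_pos] using hpos) h
  exact ENNReal.toReal_pos h1.ne' (mlam_Ioo_ne_top lam hlam u v hu)

def Decomp (lam : ℝ) (f : ℝ → ℝ) (A : ℝ) : Prop :=
  ∃ (N : ℕ) (α : ℕ → ℝ) (a : ℕ → ℝ → ℝ),
    (∀ j < N, IsDeltaAtom lam (a j)) ∧
    (∀ᵐ x ∂(mlam lam), f x = ∑ j ∈ Finset.range N, α j * a j x) ∧
    ∑ j ∈ Finset.range N, |α j| ≤ A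

lemma Decomp.mono {lam : ℝ} {f : ℝ → ℝ} {A B : ℝ} (h : Decomp lam f A) (hAB : A ≤ B) :
    Decomp lam f B := by
  obtain ⟨N, α, a, h1, h2, h3⟩ := h
  exact ⟨N, α, a, h1, h2, le_trans h3 hAB⟩

lemma Decomp.congr {lam : ℝ} {f g : ℝ → ℝ} {A : ℝ} (h : Decomp lam g A)
    (hfg : ∀ x, f x = g x) : Decomp lam f A := by
  obtain ⟨N, α, a, h1, h2, h3⟩ := h
  exact ⟨N, α, a, h1, h2.mono (fun x hx => (hfg x).trans hx), h3⟩

lemma Decomp.add {lam : ℝ} {f g : ℝ → ℝ} {A B : ℝ} (hf : Decomp lam f A)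
    (hg : Decomp lam g B) : Decomp lam (fun x => f x + g x) (A + B) := by
  obtain ⟨N₁, α₁, a₁, hf1, hf2, hf3⟩ := hf
  obtain ⟨N₂, α₂, a₂, hg1, hg2, hg3⟩ := hg
  refine ⟨N₁ + N₂, fun j => if j < N₁ then α₁ j else α₂ (j - N₁),
    fun j => if j < N₁ then a₁ j else a₂ (j - N₁), ?_, ?_, ?_⟩
  · intro j hj
    by_cases h : j < N₁
    · simpa [h] using hf1 j h
    · have : j - N₁ < N₂ := by omega
      simpa [h] using hg1 _ this
  · filter_upwards [hf2, hg2] with x h1 h2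
    rw [Finset.sum_range_add]
    have e1 : ∀ i ∈ Finset.range N₁,
        (if i < N₁ then α₁ i else α₂ (i - N₁)) * (if i < N₁ then a₁ i else a₂ (i - N₁)) x
          = α₁ i * a₁ i x := by
      intro i hi
      simp [Finset.mem_range.mp hi]
    have e2 : ∀ i ∈ Finset.range N₂,
        (if N₁ + i < N₁ then α₁ (N₁+i) else α₂ (N₁ + i - N₁)) *
          (if N₁ + i < N₁ then a₁ (N₁+i) else a₂ (N₁ + i - N₁)) x = α₂ i * a₂ i x := by
      intro i hi
      have : ¬ (N₁ + i < N₁) := by omega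
      simp [this]
    rw [Finset.sum_congr rfl e1, Finset.sum_congr rfl e2, h1, h2]
  · rw [Finset.sum_range_add]
    have e1 : ∀ i ∈ Finset.range N₁, |if i < N₁ then α₁ i else α₂ (i - N₁)| = |α₁ i| := by
      intro i hi; simp [Finset.mem_range.mp hi]
    have e2 : ∀ i ∈ Finset.range N₂,
        |if N₁ + i < N₁ then α₁ (N₁+i) else α₂ (N₁ + i - N₁)| = |α₂ i| := by
      intro i hi
      have : ¬ (N₁ + i < N₁) := by omega
      simp [this]
    rw [Finset.sum_congr rfl e1, Finset.sum_congr rfl e2]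
    exact add_le_add hf3 hg3

lemma Decomp.zero {lam : ℝ} : Decomp lam (fun _ => (0:ℝ)) 0 := by
  exact ⟨0, fun _ => 0, fun _ _ => 0, by simp, by simp, by simp⟩

lemma Decomp.smul {lam : ℝ} {f : ℝ → ℝ} {A : ℝ} (c : ℝ) (hf : Decomp lam f A) (hA : 0 ≤ A) :
    Decomp lam (fun x => c * f x) (|c| * A) := by
  obtain ⟨N, α, a, h1, h2, h3⟩ := hf
  refine ⟨N, fun j => c * α j, a, h1, ?_, ?_⟩
  · filter_upwards [h2] with x hx
    rw [hx, Finset.mul_sum]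
    exact Finset.sum_congr rfl (fun i _ => by ring)
  · have e : ∑ j ∈ Finset.range N, |c * α j| = |c| * ∑ j ∈ Finset.range N, |α j| := by
      rw [Finset.mul_sum]
      exact Finset.sum_congr rfl (fun i _ => abs_mul c (α i))
    rw [e]
    exact mul_le_mul_of_nonneg_left h3 (abs_nonneg c)

lemma Decomp.sum {lam : ℝ} (n : ℕ) (g : ℕ → ℝ → ℝ) (A : ℕ → ℝ)
    (h : ∀ k < n, Decomp lam (g k) (A k)) :
    Decomp lam (fun x => ∑ k ∈ Finset.range n, g k x) (∑ k ∈ Finset.range n, A k) := by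
  induction n with
  | zero => simpa using (Decomp.zero (lam := lam))
  | succ m ih =>
    have := (ih (fun k hk => h k (by omega))).add (h m (by omega))
    rw [Finset.sum_range_succ]
    exact this.congr (fun x => by rw [Finset.sum_range_succ])

lemma decomp_single (lam : ℝ) (hlam : 0 < lam) (u v M : ℝ) (f : ℝ → ℝ) (hf : Measurable f)
    (hu : 0 ≤ u) (huv : u < v) (hM : 0 < M)
    (hsupp : ∀ x, x ∉ Set.Ioo u v → f x = 0) (hbd : ∀ x, |f x| ≤ M)
    (hint : ∫ x, f x ∂(mlam lam) = 0) :
    Decomp lam f (M * (mlam lam (Set.Ioo u v)).toReal) := by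
  set μI := (mlam lam (Set.Ioo u v)).toReal with hμI
  have hμpos : 0 < μI := mlam_Ioo_pos lam hlam u v hu huv
  have hMμ : 0 < M * μI := mul_pos hM hμpos
  refine ⟨1, fun _ => M * μI, fun _ x => (M * μI)⁻¹ * f x, ?_, ?_, ?_⟩
  · intro j _
    refine ⟨(measurable_const.mul hf), u, v, hu, huv, ?_, ?_, ?_⟩
    · intro x hx
      show (M * μI)⁻¹ * f x = 0
      rw [hsupp x hx, mul_zero]
    · refine Filter.Eventually.of_forall (fun x => ?_)
      show |(M * μI)⁻¹ * f x| ≤ μI⁻¹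
      rw [abs_mul, abs_of_pos (inv_pos.2 hMμ)]
      calc (M * μI)⁻¹ * |f x| ≤ (M * μI)⁻¹ * M :=
            mul_le_mul_of_nonneg_left (hbd x) (le_of_lt (inv_pos.2 hMμ))
        _ = μI⁻¹ := by field_simp
    · show ∫ x, (M * μI)⁻¹ * f x ∂(mlam lam) = 0
      rw [integral_const_mul, hint, mul_zero]
  · refine Filter.Eventually.of_forall (fun x => ?_)
    rw [Finset.sum_range_one]
    field_simp
  · rw [Finset.sum_range_one, abs_of_pos hMμ]

/-- normalized indicator of `Ioo u v` -/
noncomputable def nind (lam u v : ℝ) : ℝ → ℝ :=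
  fun x => ((mlam lam (Set.Ioo u v)).toReal)⁻¹ * (Set.Ioo u v).indicator 1 x

lemma nind_measurable (lam u v : ℝ) : Measurable (nind lam u v) :=
  (measurable_const.mul ((measurable_one).indicator measurableSet_Ioo))

lemma nind_integrable (lam : ℝ) (hlam : 0 < lam) (u v : ℝ) (hu : 0 ≤ u) :
    Integrable (nind lam u v) (mlam lam) := by
  have h1 : Integrable ((Set.Ioo u v).indicator (fun _ => (1:ℝ))) (mlam lam) := by
    rw [integrable_indicator_iff measurableSet_Ioo]
    exact integrableOn_const (mlam_Ioo_ne_top lam hlam u v hu)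
  have := h1.const_mul ((mlam lam (Set.Ioo u v)).toReal)⁻¹
  exact this.congr (Filter.Eventually.of_forall (fun x => rfl))

lemma nind_integral (lam : ℝ) (hlam : 0 < lam) (u v : ℝ) (hu : 0 ≤ u) (huv : u < v) :
    ∫ x, nind lam u v x ∂(mlam lam) = 1 := by
  have hμpos : 0 < (mlam lam (Set.Ioo u v)).toReal := mlam_Ioo_pos lam hlam u v hu huv
  unfold nind
  rw [integral_const_mul]
  have : ∫ x, (Set.Ioo u v).indicator (1:ℝ→ℝ) x ∂(mlam lam)
      = (mlam lam (Set.Ioo u v)).toReal • (1:ℝ) := by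
    have := integral_indicator_const (1:ℝ) (measurableSet_Ioo (a := u) (b := v))
      (μ := mlam lam)
    simpa [measureReal_def] using this
  rw [this]
  rw [smul_eq_mul, mul_one]; field_simp

lemma nind_abs_le (lam u v : ℝ) (x : ℝ) :
    |nind lam u v x| ≤ ((mlam lam (Set.Ioo u v)).toReal)⁻¹ := by
  unfold nind
  rw [abs_mul]
  have h1 : |(Set.Ioo u v).indicator (1:ℝ→ℝ) x| ≤ 1 := by
    by_cases hx : x ∈ Set.Ioo u v <;> simp [Set.indicator_apply, hx]
  have h2 : (0:ℝ) ≤ ((mlam lam (Set.Ioo u v)).toReal)⁻¹ := by positivity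
  calc |((mlam lam (Set.Ioo u v)).toReal)⁻¹| * |(Set.Ioo u v).indicator (1:ℝ→ℝ) x|
      ≤ |((mlam lam (Set.Ioo u v)).toReal)⁻¹| * 1 :=
        mul_le_mul_of_nonneg_left h1 (abs_nonneg _)
    _ = ((mlam lam (Set.Ioo u v)).toReal)⁻¹ := by rw [mul_one, abs_of_nonneg h2]

lemma nind_support (lam u v : ℝ) (x : ℝ) (hx : x ∉ Set.Ioo u v) : nind lam u v x = 0 := by
  unfold nind
  rw [Set.indicator_of_notMem hx, mul_zero]

/-- Difference of two normalized indicators, both contained in `Ioo U V`. -/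
lemma decomp_pair (lam : ℝ) (hlam : 0 < lam) (u₁ v₁ u₂ v₂ U V : ℝ)
    (hU : 0 ≤ U) (h1 : U ≤ u₁) (h1' : u₁ < v₁) (h1'' : v₁ ≤ V) (hu1 : 0 ≤ u₁)
    (h2 : U ≤ u₂) (h2' : u₂ < v₂) (h2'' : v₂ ≤ V) (hu2 : 0 ≤ u₂) :
    Decomp lam (fun x => nind lam u₁ v₁ x - nind lam u₂ v₂ x)
      ((((mlam lam (Set.Ioo u₁ v₁)).toReal)⁻¹ + ((mlam lam (Set.Ioo u₂ v₂)).toReal)⁻¹)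
        * (mlam lam (Set.Ioo U V)).toReal) := by
  have hμ1 : 0 < (mlam lam (Set.Ioo u₁ v₁)).toReal := mlam_Ioo_pos lam hlam _ _ hu1 h1'
  have hμ2 : 0 < (mlam lam (Set.Ioo u₂ v₂)).toReal := mlam_Ioo_pos lam hlam _ _ hu2 h2'
  have hUV : U < V := lt_of_le_of_lt h1 (lt_of_lt_of_le h1' h1'')
  refine decomp_single lam hlam U V _ _ ((nind_measurable _ _ _).sub (nind_measurable _ _ _))
    hU hUV (by positivity) ?_ ?_ ?_
  · intro x hx
    have hx1 : x ∉ Set.Ioo u₁ v₁ := fun h =>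
      hx ⟨lt_of_le_of_lt h1 h.1, lt_of_lt_of_le h.2 h1''⟩
    have hx2 : x ∉ Set.Ioo u₂ v₂ := fun h =>
      hx ⟨lt_of_le_of_lt h2 h.1, lt_of_lt_of_le h.2 h2''⟩
    rw [nind_support _ _ _ _ hx1, nind_support _ _ _ _ hx2, sub_zero]
  · intro x
    calc |nind lam u₁ v₁ x - nind lam u₂ v₂ x| ≤ |nind lam u₁ v₁ x| + |nind lam u₂ v₂ x| :=
        abs_sub _ _
      _ ≤ _ := add_le_add (nind_abs_le _ _ _ _) (nind_abs_le _ _ _ _)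
  · rw [integral_sub (nind_integrable lam hlam _ _ hu1) (nind_integrable lam hlam _ _ hu2),
      nind_integral lam hlam _ _ hu1 h1', nind_integral lam hlam _ _ hu2 h2', sub_self]

/-- interval `J x R = Ioo (max (x-R) 0) (x+R)` -/
def JJ (x R : ℝ) : Set ℝ := Set.Ioo (max (x - R) 0) (x + R)

lemma Ilam_eq_JJ (x r : ℝ) : Ilam x r = JJ x r := Ilam_eq x r

lemma mlam_toReal_mono (lam : ℝ) (hlam : 0 < lam) {u v u' v' : ℝ} (hu' : 0 ≤ u')
    (hsub : Set.Ioo u v ⊆ Set.Ioo u' v') :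
    (mlam lam (Set.Ioo u v)).toReal ≤ (mlam lam (Set.Ioo u' v')).toReal :=
  ENNReal.toReal_mono (mlam_Ioo_ne_top lam hlam u' v' hu') (measure_mono hsub)

lemma JJ_subset (x R x' R' : ℝ) (h1 : x' - R' ≤ x - R) (h2 : x + R ≤ x' + R') :
    JJ x R ⊆ JJ x' R' := by
  apply Set.Ioo_subset_Ioo _ h2
  exact max_le_max h1 (le_refl 0)

lemma mlam_JJ_doubling (lam : ℝ) (hlam : 0 < lam) (x R : ℝ) (hx : 0 < x) (hR : 0 < R) :
    (mlam lam (JJ x (2*R))).toReal ≤ (2:ℝ)^(4*lam+3) * (mlam lam (JJ x R)).toReal := by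
  have h2lam : (0:ℝ) ≤ 2*lam := by linarith
  have hQ : (0:ℝ) < 2^(2*lam) := Real.rpow_pos_of_pos (by norm_num) _
  -- upper bound for the big interval
  have hup : mlam lam (JJ x (2*R)) ≤ ENNReal.ofReal ((x+2*R)^(2*lam) * (4*R)) := by
    refine le_trans (mlam_Ioo_le lam hlam _ _ (le_max_right _ 0)) ?_
    apply ENNReal.ofReal_le_ofReal
    apply mul_le_mul_of_nonneg_left _ (Real.rpow_nonneg (by linarith) _)
    have := le_max_left (x - 2*R) (0:ℝ)
    have := le_max_right (x - 2*R) (0:ℝ)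
    rcases le_or_gt 0 (x - 2*R) with h | h
    · rw [max_eq_left h]; linarith
    · rw [max_eq_right h.le]; linarith
  -- lower bound for the small interval, and the real inequality
  have key : (x+2*R)^(2*lam) * (4*R) ≤ 2^(4*lam+3) * ((mlam lam (JJ x R)).toReal) := by
    rcases le_or_gt x (3*R) with hcase | hcase
    · -- use c = (x+R)/2
      set c := (x+R)/2 with hc
      have hc0 : 0 < c := by simp only [hc]; linarith
      have hlow := mlam_Ioo_ge lam hlam (max (x-R) 0) (x+R) c hc0.le
        (max_le (by simp only [hc]; linarith) (by simp only [hc]; linarith)) (by simp only [hc]; linarith)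
      have hBR : c^(2*lam) * ((x+R) - c) ≤ (mlam lam (JJ x R)).toReal := by
        have := ENNReal.toReal_mono (mlam_Ioo_ne_top lam hlam _ _ (le_max_right _ 0)) hlow
        rwa [ENNReal.toReal_ofReal (mul_nonneg (Real.rpow_nonneg hc0.le _)
          (by simp only [hc]; linarith))] at this
      have hP : (0:ℝ) < (x+R)^(2*lam) := Real.rpow_pos_of_pos (by linarith) _
      have hA : (x+2*R)^(2*lam) ≤ 2^(2*lam) * (x+R)^(2*lam) := by
        have h1 : (x+2*R) ≤ 2*(x+R) := by linarith
        have h2 : (x+2*R)^(2*lam) ≤ (2*(x+R))^(2*lam) :=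
          Real.rpow_le_rpow (by linarith) h1 h2lam
        rwa [Real.mul_rpow (by norm_num) (by linarith)] at h2
      have hcr : c^(2*lam) = (x+R)^(2*lam) / 2^(2*lam) := by
        rw [hc, Real.div_rpow (by linarith) (by norm_num)]
      have hsplit : (2:ℝ)^(4*lam+3) = 2^(2*lam) * 2^(2*lam) * 8 := by
        rw [show (4*lam+3) = 2*lam + (2*lam + 3) by ring, Real.rpow_add (by norm_num),
          Real.rpow_add (by norm_num)]
        norm_num
        ring
      calc (x+2*R)^(2*lam) * (4*R)
          ≤ (2^(2*lam) * (x+R)^(2*lam)) * (4*(x+R)) := by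
            apply mul_le_mul hA (by linarith) (by linarith)
            positivity
        _ = (2^(2*lam) * 2^(2*lam) * 8) * (((x+R)^(2*lam) / 2^(2*lam)) * ((x+R) - c)) := by
            rw [hc]; field_simp; ring
        _ = 2^(4*lam+3) * (c^(2*lam) * ((x+R) - c)) := by rw [hsplit, hcr]
        _ ≤ 2^(4*lam+3) * ((mlam lam (JJ x R)).toReal) := by
            apply mul_le_mul_of_nonneg_left hBR (by positivity)
    · -- use c = x
      have hlow := mlam_Ioo_ge lam hlam (max (x-R) 0) (x+R) x hx.le
        (max_le (by linarith) hx.le) (by linarith)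
      have hBR : x^(2*lam) * R ≤ (mlam lam (JJ x R)).toReal := by
        have := ENNReal.toReal_mono (mlam_Ioo_ne_top lam hlam _ _ (le_max_right _ 0)) hlow
        rw [ENNReal.toReal_ofReal (mul_nonneg (Real.rpow_nonneg hx.le _) (by linarith))] at this
        calc x^(2*lam) * R = x^(2*lam) * ((x+R) - x) := by ring
          _ ≤ _ := this
      have hP : (0:ℝ) < x^(2*lam) := Real.rpow_pos_of_pos hx _
      have hA : (x+2*R)^(2*lam) ≤ 2^(2*lam) * x^(2*lam) := by
        have h1 : (x+2*R) ≤ 2*x := by linarith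
        have h2 : (x+2*R)^(2*lam) ≤ (2*x)^(2*lam) :=
          Real.rpow_le_rpow (by linarith) h1 h2lam
        rwa [Real.mul_rpow (by norm_num) hx.le] at h2
      have hexp : (2:ℝ)^(2*lam) * 4 ≤ 2^(4*lam+3) := by
        have h1 : (2:ℝ)^(2*lam) * 4 = 2^(2*lam+2) := by
          rw [Real.rpow_add (by norm_num)]
          norm_num
        rw [h1]
        exact Real.rpow_le_rpow_of_exponent_le (by norm_num) (by linarith)
      calc (x+2*R)^(2*lam) * (4*R) ≤ (2^(2*lam) * x^(2*lam)) * (4*R) := by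
            apply mul_le_mul_of_nonneg_right hA (by linarith)
        _ = (2^(2*lam) * 4) * (x^(2*lam) * R) := by ring
        _ ≤ 2^(4*lam+3) * (x^(2*lam) * R) := by
            apply mul_le_mul_of_nonneg_right hexp (by positivity)
        _ ≤ 2^(4*lam+3) * ((mlam lam (JJ x R)).toReal) := by
            apply mul_le_mul_of_nonneg_left hBR (by positivity)
  have := ENNReal.toReal_mono (a := mlam lam (JJ x (2*R)))
    (b := ENNReal.ofReal ((x+2*R)^(2*lam) * (4*R))) ENNReal.ofReal_ne_top hup
  refine le_trans this ?_
  rw [ENNReal.toReal_ofReal (by positivity)]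
  exact key

def uu (x r : ℝ) (k : ℕ) : ℝ := max (x - 2^k*r) 0
def vv (x r : ℝ) (k : ℕ) : ℝ := x + 2^k*r

lemma uu_nonneg (x r : ℝ) (k : ℕ) : 0 ≤ uu x r k := le_max_right _ _

lemma rad_pos (r : ℝ) (hr : 0 < r) (k : ℕ) : (0:ℝ) < 2^k*r := by positivity

lemma uu_lt_vv (x r : ℝ) (hx : 0 < x) (hr : 0 < r) (k : ℕ) : uu x r k < vv x r k := by
  have h := rad_pos r hr k
  exact max_lt (by unfold vv; linarith) (by unfold vv; linarith)

lemma uu_anti (x r : ℝ) (hr : 0 < r) (k : ℕ) : uu x r (k+1) ≤ uu x r k := by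
  apply max_le_max _ (le_refl 0)
  have h1 : (2:ℝ)^k ≤ 2^(k+1) := by
    apply pow_le_pow_right₀ (by norm_num)
    omega
  nlinarith

lemma vv_mono (x r : ℝ) (hr : 0 < r) (k : ℕ) : vv x r k ≤ vv x r (k+1) := by
  unfold vv
  have h1 : (2:ℝ)^k ≤ 2^(k+1) := by
    apply pow_le_pow_right₀ (by norm_num)
    omega
  nlinarith

noncomputable def muu (lam x r : ℝ) (k : ℕ) : ℝ :=
  (mlam lam (Set.Ioo (uu x r k) (vv x r k))).toReal

lemma muu_pos (lam : ℝ) (hlam : 0 < lam) (x r : ℝ) (hx : 0 < x) (hr : 0 < r) (k : ℕ) :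
    0 < muu lam x r k :=
  mlam_Ioo_pos lam hlam _ _ (uu_nonneg x r k) (uu_lt_vv x r hx hr k)

lemma muu_dbl (lam : ℝ) (hlam : 0 < lam) (x r : ℝ) (hx : 0 < x) (hr : 0 < r) (k : ℕ) :
    muu lam x r (k+1) ≤ 2^(4*lam+3) * muu lam x r k := by
  have h : Set.Ioo (uu x r (k+1)) (vv x r (k+1)) = JJ x (2*(2^k*r)) := by
    unfold uu vv JJ
    rw [show (2:ℝ)^(k+1)*r = 2*(2^k*r) by rw [pow_succ]; ring]
  unfold muu
  rw [h]
  exact mlam_JJ_doubling lam hlam x (2^k*r) hx (rad_pos r hr k)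

lemma my_inv_mul_le {a b c : ℝ} (ha : 0 < a) (h : b ≤ c * a) : a⁻¹ * b ≤ c := by
  rw [inv_mul_le_iff₀ ha]
  linarith [h]

/-- one chain step -/
lemma chain_step (lam : ℝ) (hlam : 0 < lam) (x r : ℝ) (hx : 0 < x) (hr : 0 < r) (k : ℕ) :
    Decomp lam (fun t => nind lam (uu x r k) (vv x r k) t
        - nind lam (uu x r (k+1)) (vv x r (k+1)) t) (2^(4*lam+3) + 1) := by
  have h := decomp_pair lam hlam (uu x r k) (vv x r k) (uu x r (k+1)) (vv x r (k+1))
    (uu x r (k+1)) (vv x r (k+1)) (uu_nonneg x r (k+1)) (uu_anti x r hr k)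
    (uu_lt_vv x r hx hr k) (vv_mono x r hr k) (uu_nonneg x r k)
    (le_refl _) (uu_lt_vv x r hx hr (k+1)) (le_refl _) (uu_nonneg x r (k+1))
  refine h.mono ?_
  have hμ1 : 0 < muu lam x r k := muu_pos lam hlam x r hx hr k
  have hμ2 : 0 < muu lam x r (k+1) := muu_pos lam hlam x r hx hr (k+1)
  have hd := muu_dbl lam hlam x r hx hr k
  show ((muu lam x r k)⁻¹ + (muu lam x r (k+1))⁻¹) * muu lam x r (k+1) ≤ 2^(4*lam+3) + 1
  rw [add_mul]
  have h1 : (muu lam x r k)⁻¹ * muu lam x r (k+1) ≤ 2^(4*lam+3) :=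
    my_inv_mul_le hμ1 (by linarith)
  have h2 : (muu lam x r (k+1))⁻¹ * muu lam x r (k+1) = 1 := inv_mul_cancel₀ hμ2.ne'
  linarith

/-- the cross step connecting the two chains -/
lemma cross_step (lam : ℝ) (hlam : 0 < lam) (x₁ x₂ r : ℝ) (hx₁ : 0 < x₁) (hx₂ : 0 < x₂)
    (hr : 0 < r) (K : ℕ) (hd1 : x₁ - x₂ ≤ 2^K*r) (hd2 : x₂ - x₁ ≤ 2^K*r) :
    Decomp lam (fun t => nind lam (uu x₁ r K) (vv x₁ r K) t
        - nind lam (uu x₂ r K) (vv x₂ r K) t) (2^(4*lam+3) + (2^(4*lam+3))^2) := by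
  have hpK : (0:ℝ) < 2^K*r := rad_pos r hr K
  have hpow : (2:ℝ)^(K+1)*r = 2*(2^K*r) := by rw [pow_succ]; ring
  have h := decomp_pair lam hlam (uu x₁ r K) (vv x₁ r K) (uu x₂ r K) (vv x₂ r K)
    (uu x₁ r (K+1)) (vv x₁ r (K+1)) (uu_nonneg x₁ r (K+1)) (uu_anti x₁ r hr K)
    (uu_lt_vv x₁ r hx₁ hr K) (vv_mono x₁ r hr K) (uu_nonneg x₁ r K)
    (max_le_max (by rw [hpow]; nlinarith) (le_refl 0))
    (uu_lt_vv x₂ r hx₂ hr K) (by unfold vv; rw [hpow]; nlinarith) (uu_nonneg x₂ r K)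
  refine h.mono ?_
  have hμ1 : 0 < muu lam x₁ r K := muu_pos lam hlam x₁ r hx₁ hr K
  have hμ2 : 0 < muu lam x₂ r K := muu_pos lam hlam x₂ r hx₂ hr K
  show ((muu lam x₁ r K)⁻¹ + (muu lam x₂ r K)⁻¹) * muu lam x₁ r (K+1)
      ≤ 2^(4*lam+3) + (2^(4*lam+3))^2
  have hCd : (0:ℝ) < 2^(4*lam+3) := Real.rpow_pos_of_pos (by norm_num) _
  have h1 : (muu lam x₁ r K)⁻¹ * muu lam x₁ r (K+1) ≤ 2^(4*lam+3) :=
    my_inv_mul_le hμ1 (by linarith [muu_dbl lam hlam x₁ r hx₁ hr K])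
  -- μ1(K+1) ≤ Cd² μ2(K)
  have hsub : Set.Ioo (uu x₁ r (K+1)) (vv x₁ r (K+1))
      ⊆ Set.Ioo (uu x₂ r (K+2)) (vv x₂ r (K+2)) := by
    apply Set.Ioo_subset_Ioo
    · apply max_le_max _ (le_refl 0)
      have e1 : (2:ℝ)^(K+2)*r = 4*(2^K*r) := by rw [pow_succ, pow_succ]; ring
      rw [hpow, e1]; nlinarith
    · have e1 : (2:ℝ)^(K+2)*r = 4*(2^K*r) := by rw [pow_succ, pow_succ]; ring
      unfold vv; rw [hpow, e1]; nlinarith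
  have h2a : muu lam x₁ r (K+1) ≤ muu lam x₂ r (K+2) :=
    mlam_toReal_mono lam hlam (uu_nonneg x₂ r (K+2)) hsub
  have h2b : muu lam x₂ r (K+2) ≤ 2^(4*lam+3) * (2^(4*lam+3) * muu lam x₂ r K) := by
    calc muu lam x₂ r (K+2) ≤ 2^(4*lam+3) * muu lam x₂ r (K+1) :=
          muu_dbl lam hlam x₂ r hx₂ hr (K+1)
      _ ≤ _ := mul_le_mul_of_nonneg_left (muu_dbl lam hlam x₂ r hx₂ hr K) hCd.le
  have h2 : (muu lam x₂ r K)⁻¹ * muu lam x₁ r (K+1) ≤ (2^(4*lam+3))^2 := by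
    apply my_inv_mul_le hμ2
    calc muu lam x₁ r (K+1) ≤ 2^(4*lam+3) * (2^(4*lam+3) * muu lam x₂ r K) :=
          le_trans h2a h2b
      _ = (2^(4*lam+3))^2 * muu lam x₂ r K := by ring
  rw [add_mul]
  linarith

/-- decomposition of one cancelled bump -/
lemma bump_decomp (lam : ℝ) (hlam : 0 < lam) (x r D s : ℝ) (f : ℝ → ℝ) (hf : Measurable f)
    (hx : 0 < x) (hr : 0 < r) (hD : 0 < D)
    (hb : ∀ t, |(Set.Ioo (uu x r 0) (vv x r 0)).indicator f t| ≤ D)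
    (hs : |s| ≤ D * muu lam x r 0)
    (hsint : ∫ t, (Set.Ioo (uu x r 0) (vv x r 0)).indicator f t ∂(mlam lam) = s) :
    Decomp lam (fun t => (Set.Ioo (uu x r 0) (vv x r 0)).indicator f t
        - s * nind lam (uu x r 0) (vv x r 0) t) (2*D * muu lam x r 0) := by
  set u := uu x r 0
  set v := vv x r 0
  have hu : 0 ≤ u := uu_nonneg x r 0
  have huv : u < v := uu_lt_vv x r hx hr 0
  have hμ : 0 < muu lam x r 0 := muu_pos lam hlam x r hx hr 0
  have hind : Integrable ((Set.Ioo u v).indicator f) (mlam lam) := by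
    rw [integrable_indicator_iff measurableSet_Ioo]
    apply Measure.integrableOn_of_bounded (mlam_Ioo_ne_top lam hlam u v hu)
      hf.aestronglyMeasurable
    apply ae_restrict_of_forall_mem measurableSet_Ioo
    intro t ht
    have := hb t
    rwa [Set.indicator_of_mem ht, Real.norm_eq_abs] at *
  have key := decomp_single lam hlam u v (2*D)
    (fun t => (Set.Ioo u v).indicator f t - s * nind lam u v t)
    ((hf.indicator measurableSet_Ioo).sub ((nind_measurable lam u v).const_mul s))
    hu huv (by linarith) ?_ ?_ ?_
  · exact key.mono (le_refl _)
  · intro t ht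
    show (Set.Ioo u v).indicator f t - s * nind lam u v t = 0
    rw [Set.indicator_of_notMem ht, nind_support lam u v t ht, mul_zero, sub_zero]
  · intro t
    have h1 : |(Set.Ioo u v).indicator f t| ≤ D := hb t
    have h2 : |s * nind lam u v t| ≤ D := by
      rw [abs_mul]
      calc |s| * |nind lam u v t| ≤ (D * muu lam x r 0) * (muu lam x r 0)⁻¹ := by
            apply mul_le_mul hs (nind_abs_le lam u v t) (abs_nonneg _) (by positivity)
        _ = D := by field_simp
    calc |(Set.Ioo u v).indicator f t - s * nind lam u v t|
        ≤ |(Set.Ioo u v).indicator f t| + |s * nind lam u v t| := abs_sub _ _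
      _ ≤ 2*D := by linarith
  · rw [integral_sub hind ((nind_integrable lam hlam u v hu).const_mul s), hsint,
      integral_const_mul, nind_integral lam hlam u v hu huv, mul_one, sub_self]


set_option maxHeartbeats 4000000 in
/-- Atomic decomposition of a function bounded by two bumps with cancellation:
if `∫ f dm_λ = 0`, `|f| ≤ D₁ 1_{I(x₁,r)} + D₂ 1_{I(x₂,r)}` and `|x₁-x₂| ≥ 4r`, then `f`
decomposes into finitely many `(1,∞)_{Δ_λ}`-atoms with coefficient sum controlled by
`C log₂(|x₁-x₂|/r) (D₁ m_λ(I(x₁,r)) + D₂ m_λ(I(x₂,r)))`. -/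
theorem atomic_decomposition_two_bumps (lam : ℝ) (hlam : 0 < lam) :
    ∃ C : ℝ, 0 < C ∧
      ∀ (f : ℝ → ℝ) (x₁ x₂ r D₁ D₂ : ℝ), Measurable f →
        0 < x₁ → 0 < x₂ → 0 < r → 0 < D₁ → 0 < D₂ →
        (∫ x, f x ∂(mlam lam)) = 0 →
        (∀ x : ℝ, |f x| ≤ D₁ * (Ilam x₁ r).indicator 1 x + D₂ * (Ilam x₂ r).indicator 1 x) →
        4 * r ≤ |x₁ - x₂| →
        ∃ (N : ℕ) (α : ℕ → ℝ) (a : ℕ → ℝ → ℝ),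
          (∀ j < N, IsDeltaAtom lam (a j)) ∧
          (∀ᵐ x ∂(mlam lam), f x = ∑ j ∈ Finset.range N, α j * a j x) ∧
          ∑ j ∈ Finset.range N, |α j| ≤
            C * Real.logb 2 (|x₁ - x₂| / r) *
              (D₁ * (mlam lam (Ilam x₁ r)).toReal + D₂ * (mlam lam (Ilam x₂ r)).toReal) := by
  have hCdpos : (0:ℝ) < 2^(4*lam+3) := Real.rpow_pos_of_pos (by norm_num) _
  have hCd1 : (1:ℝ) ≤ 2^(4*lam+3) := by
    have := Real.rpow_le_rpow_of_exponent_le (by norm_num : (1:ℝ) ≤ 2)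
      (by linarith : (0:ℝ) ≤ 4*lam+3)
    simpa using this
  refine ⟨5 + 5*2^(4*lam+3) + (2^(4*lam+3))^2, by positivity, ?_⟩
  intro f x₁ x₂ r D₁ D₂ hf hx₁ hx₂ hr hD₁ hD₂ hint hbound hsep
  have hd : 0 < |x₁ - x₂| := by linarith
  have hd1 : x₁ - x₂ ≤ |x₁ - x₂| := le_abs_self _
  have hd2 : x₂ - x₁ ≤ |x₁ - x₂| := by linarith [neg_abs_le (x₁ - x₂)]
  have hdr4 : (4:ℝ) ≤ |x₁ - x₂| / r := (le_div_iff₀ hr).2 (by linarith)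
  have hL2 : 2 ≤ Real.logb 2 (|x₁ - x₂| / r) := by
    have h4 : Real.logb 2 4 = 2 := by
      rw [show (4:ℝ) = 2^(2:ℝ) by
        rw [show (2:ℝ)^(2:ℝ) = 2^(2:ℕ) from Real.rpow_natCast 2 2]; norm_num]
      exact Real.logb_rpow (b := 2) (by norm_num) (by norm_num)
    have h5 := Real.logb_le_logb_of_le (b := 2) (by norm_num) (by norm_num : (0:ℝ) < 4) hdr4
    rw [h4] at h5
    exact h5
  set L := Real.logb 2 (|x₁ - x₂| / r) with hLdef
  set K := ⌈L⌉₊ with hKdef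
  have hKL : (K:ℝ) ≤ 2*L := by
    have h := Nat.ceil_lt_add_one (by linarith : (0:ℝ) ≤ L)
    rw [← hKdef] at h
    linarith
  have hdR : |x₁ - x₂| ≤ 2^K*r := by
    have h1 : |x₁ - x₂|/r = 2^L := (Real.rpow_logb (by norm_num) (by norm_num)
      (by positivity)).symm
    have h2 : (2:ℝ)^L ≤ 2^((K:ℕ):ℝ) :=
      Real.rpow_le_rpow_of_exponent_le (by norm_num) (Nat.le_ceil L)
    have h3 : (2:ℝ)^((K:ℕ):ℝ) = 2^(K:ℕ) := Real.rpow_natCast 2 K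
    have h4 : |x₁ - x₂|/r ≤ 2^K := by rw [h1, ← h3]; exact h2
    calc |x₁ - x₂| = (|x₁ - x₂|/r)*r := by field_simp
      _ ≤ 2^K*r := mul_le_mul_of_nonneg_right h4 hr.le
  -- rewrite the bumps
  have hI1 : Ilam x₁ r = Set.Ioo (uu x₁ r 0) (vv x₁ r 0) := by
    rw [Ilam_eq]; unfold uu vv; norm_num
  have hI2 : Ilam x₂ r = Set.Ioo (uu x₂ r 0) (vv x₂ r 0) := by
    rw [Ilam_eq]; unfold uu vv; norm_num
  rw [hI1, hI2]
  simp only [hI1, hI2] at hbound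
  have he0 : (2:ℝ)^(0:ℕ)*r = r := by norm_num
  -- disjointness
  have hdisj : ∀ t, t ∈ Set.Ioo (uu x₁ r 0) (vv x₁ r 0) →
      t ∉ Set.Ioo (uu x₂ r 0) (vv x₂ r 0) := by
    intro t ht ht'
    have h1 : x₁ - r < t := by
      have := lt_of_le_of_lt (le_max_left _ 0) ht.1
      unfold uu at this; rw [he0] at this; linarith
    have h2 : t < x₁ + r := by have := ht.2; unfold vv at this; rw [he0] at this; linarith
    have h3 : x₂ - r < t := by
      have := lt_of_le_of_lt (le_max_left _ 0) ht'.1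
      unfold uu at this; rw [he0] at this; linarith
    have h4 : t < x₂ + r := by have := ht'.2; unfold vv at this; rw [he0] at this; linarith
    rcases abs_cases (x₁ - x₂) with ⟨he, _⟩ | ⟨he, _⟩ <;> linarith
  have hdisj' : ∀ t, t ∈ Set.Ioo (uu x₂ r 0) (vv x₂ r 0) →
      t ∉ Set.Ioo (uu x₁ r 0) (vv x₁ r 0) := fun t ht ht' => hdisj t ht' ht
  -- bounds for the localized pieces
  have hb1 : ∀ t, |(Set.Ioo (uu x₁ r 0) (vv x₁ r 0)).indicator f t| ≤ D₁ := by
    intro t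
    by_cases ht : t ∈ Set.Ioo (uu x₁ r 0) (vv x₁ r 0)
    · rw [Set.indicator_of_mem ht]
      have := hbound t
      rw [Set.indicator_of_mem ht, Set.indicator_of_notMem (hdisj t ht)] at this
      simpa using this
    · rw [Set.indicator_of_notMem ht]; simpa using hD₁.le
  have hb2 : ∀ t, |(Set.Ioo (uu x₂ r 0) (vv x₂ r 0)).indicator f t| ≤ D₂ := by
    intro t
    by_cases ht : t ∈ Set.Ioo (uu x₂ r 0) (vv x₂ r 0)
    · rw [Set.indicator_of_mem ht]
      have := hbound t
      rw [Set.indicator_of_mem ht, Set.indicator_of_notMem (hdisj' t ht)] at this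
      simpa using this
    · rw [Set.indicator_of_notMem ht]; simpa using hD₂.le
  have hf0 : ∀ t, t ∉ Set.Ioo (uu x₁ r 0) (vv x₁ r 0) →
      t ∉ Set.Ioo (uu x₂ r 0) (vv x₂ r 0) → f t = 0 := by
    intro t h1 h2
    have := hbound t
    rw [Set.indicator_of_notMem h1, Set.indicator_of_notMem h2] at this
    simp only [mul_zero, add_zero] at this
    exact abs_nonpos_iff.mp this
  have hfsplit : ∀ t, f t = (Set.Ioo (uu x₁ r 0) (vv x₁ r 0)).indicator f t
      + (Set.Ioo (uu x₂ r 0) (vv x₂ r 0)).indicator f t := by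
    intro t
    by_cases h1 : t ∈ Set.Ioo (uu x₁ r 0) (vv x₁ r 0)
    · rw [Set.indicator_of_mem h1, Set.indicator_of_notMem (hdisj t h1), add_zero]
    · by_cases h2 : t ∈ Set.Ioo (uu x₂ r 0) (vv x₂ r 0)
      · rw [Set.indicator_of_notMem h1, Set.indicator_of_mem h2, zero_add]
      · rw [Set.indicator_of_notMem h1, Set.indicator_of_notMem h2, add_zero, hf0 t h1 h2]
  -- integrability
  have hind1 : Integrable ((Set.Ioo (uu x₁ r 0) (vv x₁ r 0)).indicator f) (mlam lam) := by
    rw [integrable_indicator_iff measurableSet_Ioo]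
    apply Measure.integrableOn_of_bounded
      (mlam_Ioo_ne_top lam hlam _ _ (uu_nonneg x₁ r 0)) hf.aestronglyMeasurable
    apply ae_restrict_of_forall_mem measurableSet_Ioo
    intro t ht
    have := hb1 t
    rw [Set.indicator_of_mem ht] at this
    rwa [Real.norm_eq_abs]
  have hind2 : Integrable ((Set.Ioo (uu x₂ r 0) (vv x₂ r 0)).indicator f) (mlam lam) := by
    rw [integrable_indicator_iff measurableSet_Ioo]
    apply Measure.integrableOn_of_bounded
      (mlam_Ioo_ne_top lam hlam _ _ (uu_nonneg x₂ r 0)) hf.aestronglyMeasurable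
    apply ae_restrict_of_forall_mem measurableSet_Ioo
    intro t ht
    have := hb2 t
    rw [Set.indicator_of_mem ht] at this
    rwa [Real.norm_eq_abs]
  set s1 := ∫ t, (Set.Ioo (uu x₁ r 0) (vv x₁ r 0)).indicator f t ∂(mlam lam) with hs1def
  set s2 := ∫ t, (Set.Ioo (uu x₂ r 0) (vv x₂ r 0)).indicator f t ∂(mlam lam) with hs2def
  have hsum : s1 + s2 = 0 := by
    have h1 := integral_congr_ae (μ := mlam lam) (Filter.Eventually.of_forall hfsplit)
    rw [integral_add hind1 hind2] at h1
    rw [hs1def, hs2def, ← h1, hint]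
  have habs1 : |s1| ≤ D₁ * muu lam x₁ r 0 := by
    rw [hs1def, integral_indicator measurableSet_Ioo]
    rw [← Real.norm_eq_abs]
    apply norm_setIntegral_le_of_norm_le_const
      (lt_top_iff_ne_top.2 (mlam_Ioo_ne_top lam hlam _ _ (uu_nonneg x₁ r 0)))
    · intro t ht
      rw [Real.norm_eq_abs]
      have := hb1 t
      rwa [Set.indicator_of_mem ht] at this
  have habs2 : |s2| ≤ D₂ * muu lam x₂ r 0 := by
    rw [hs2def, integral_indicator measurableSet_Ioo]
    rw [← Real.norm_eq_abs]
    apply norm_setIntegral_le_of_norm_le_const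
      (lt_top_iff_ne_top.2 (mlam_Ioo_ne_top lam hlam _ _ (uu_nonneg x₂ r 0)))
    · intro t ht
      rw [Real.norm_eq_abs]
      have := hb2 t
      rwa [Set.indicator_of_mem ht] at this
  -- the five decompositions
  have hds1 := bump_decomp lam hlam x₁ r D₁ s1 f hf hx₁ hr hD₁ hb1 habs1 hs1def.symm
  have hds2 := bump_decomp lam hlam x₂ r D₂ s2 f hf hx₂ hr hD₂ hb2 habs2 hs2def.symm
  have hdc1 : Decomp lam (fun t => ∑ k ∈ Finset.range K,
      (nind lam (uu x₁ r k) (vv x₁ r k) t - nind lam (uu x₁ r (k+1)) (vv x₁ r (k+1)) t))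
      ((K:ℝ)*(2^(4*lam+3) + 1)) := by
    have h := Decomp.sum K _ (fun _ => 2^(4*lam+3) + 1)
      (fun k _ => chain_step lam hlam x₁ r hx₁ hr k)
    exact h.mono (le_of_eq (by rw [Finset.sum_const, Finset.card_range, nsmul_eq_mul]))
  have hdc2 : Decomp lam (fun t => ∑ k ∈ Finset.range K,
      (nind lam (uu x₂ r k) (vv x₂ r k) t - nind lam (uu x₂ r (k+1)) (vv x₂ r (k+1)) t))
      ((K:ℝ)*(2^(4*lam+3) + 1)) := by
    have h := Decomp.sum K _ (fun _ => 2^(4*lam+3) + 1)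
      (fun k _ => chain_step lam hlam x₂ r hx₂ hr k)
    exact h.mono (le_of_eq (by rw [Finset.sum_const, Finset.card_range, nsmul_eq_mul]))
  have hcr := cross_step lam hlam x₁ x₂ r hx₁ hx₂ hr K (by linarith) (by linarith)
  have hKC : (0:ℝ) ≤ (K:ℝ)*(2^(4*lam+3) + 1) := by positivity
  have hCC : (0:ℝ) ≤ 2^(4*lam+3) + (2^(4*lam+3))^2 := by positivity
  have hdecomp := hds1.add (hds2.add ((hdc1.smul s1 hKC).add
    ((hdc2.smul (-s1) hKC).add (hcr.smul s1 hCC))))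
  have hs2eq : s2 = -s1 := by linarith
  have hid : ∀ t, f t = ((Set.Ioo (uu x₁ r 0) (vv x₁ r 0)).indicator f t
      - s1 * nind lam (uu x₁ r 0) (vv x₁ r 0) t)
      + (((Set.Ioo (uu x₂ r 0) (vv x₂ r 0)).indicator f t
          - s2 * nind lam (uu x₂ r 0) (vv x₂ r 0) t)
        + (s1 * (∑ k ∈ Finset.range K, (nind lam (uu x₁ r k) (vv x₁ r k) t
              - nind lam (uu x₁ r (k+1)) (vv x₁ r (k+1)) t))
          + ((-s1) * (∑ k ∈ Finset.range K, (nind lam (uu x₂ r k) (vv x₂ r k) t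
              - nind lam (uu x₂ r (k+1)) (vv x₂ r (k+1)) t))
            + s1 * (nind lam (uu x₁ r K) (vv x₁ r K) t
              - nind lam (uu x₂ r K) (vv x₂ r K) t)))) := by
    intro t
    rw [Finset.sum_range_sub' (fun k => nind lam (uu x₁ r k) (vv x₁ r k) t) K,
      Finset.sum_range_sub' (fun k => nind lam (uu x₂ r k) (vv x₂ r k) t) K,
      hs2eq]
    rw [hfsplit t]
    ring
  have hfinal := (hdecomp.congr hid)
  obtain ⟨N, α, a, H1, H2, H3⟩ := hfinal
  refine ⟨N, α, a, H1, H2, le_trans H3 ?_⟩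
  -- the numeric bound
  have hμ1 : 0 < muu lam x₁ r 0 := muu_pos lam hlam x₁ r hx₁ hr 0
  have hμ2 : 0 < muu lam x₂ r 0 := muu_pos lam hlam x₂ r hx₂ hr 0
  show 2*D₁*muu lam x₁ r 0 + (2*D₂*muu lam x₂ r 0
      + (|s1| * ((K:ℝ)*(2^(4*lam+3) + 1)) + (|(-s1)| * ((K:ℝ)*(2^(4*lam+3) + 1))
        + |s1| * (2^(4*lam+3) + (2^(4*lam+3))^2))))
    ≤ (5 + 5*2^(4*lam+3) + (2^(4*lam+3))^2) * L * (D₁ * muu lam x₁ r 0 + D₂ * muu lam x₂ r 0)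
  rw [abs_neg]
  set Q := (2:ℝ)^(4*lam+3) with hQdef
  have hE1 : 0 < D₁ * muu lam x₁ r 0 := by
    have := muu_pos lam hlam x₁ r hx₁ hr 0
    positivity
  have hE2 : 0 < D₂ * muu lam x₂ r 0 := by
    have := muu_pos lam hlam x₂ r hx₂ hr 0
    positivity
  have hsE : |s1| ≤ D₁ * muu lam x₁ r 0 := habs1
  have hQ1 : (0:ℝ) ≤ 1 + Q + Q^2 := by nlinarith
  have hQ2 : (0:ℝ) ≤ Q + Q^2 := by nlinarith
  have hQ3 : (0:ℝ) ≤ 5 + 5*Q + Q^2 := by nlinarith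
  have ht1 : |s1| * ((K:ℝ)*(Q + 1)) ≤ (D₁ * muu lam x₁ r 0) * (2*L*(Q+1)) :=
    mul_le_mul hsE (mul_le_mul_of_nonneg_right hKL (by linarith)) (by positivity) hE1.le
  have ht2 : |s1| * (Q + Q^2) ≤ (D₁ * muu lam x₁ r 0) * (Q + Q^2) :=
    mul_le_mul_of_nonneg_right hsE hQ2
  nlinarith [mul_nonneg (mul_nonneg (by linarith : (0:ℝ) ≤ L - 2) hQ1) hE1.le,
    mul_nonneg hQ2 hE1.le,
    mul_nonneg (mul_nonneg (by linarith : (0:ℝ) ≤ L - 2) hQ3) hE2.le,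
    hE2.le, hCdpos.le, ht1, ht2]
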